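/- arXiv:1705.02029 — 6 statements merged into one kernel-verified Lean document; each statement's English description precedes it below -/
import Mathlib

section
/- Let X be a closed convex set in a real inner product space E, let f : X → ℝ be convex, and let d : X → ℝ be a continuously differentiable distance generating function that is 1-strongly convex with respect to the norm ‖·‖ on E, with Bregman divergence V(x,y) = d(y) − d(x) − ⟨∇d(x), y − x⟩. Fix x^i ∈ X, a subgradient ∇f(x^i) of f at x^i, and a stepsize h_i > 0, and let x^{i+1} = argmin_{u∈X} { ⟨h_i ∇f(x^i), u⟩ + V(x^i, u) }. Then for every x ∈ X it holds that h_i ( f(x^i) − f(x) ) ≤ (h_i²/2) ‖∇f(x^i)‖² + V(x^i, x) − V(x^{i+1}, x). -/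
open scoped RealInnerProductSpace

section Aux

variable {E : Type*} [NormedAddCommGroup E] [InnerProductSpace ℝ E] [CompleteSpace E]

/-- Derivative of `t ↦ d (p + t • v)` when `d` has gradient `Gd`. -/
lemma aux_hasDerivAt_line (d : E → ℝ) (Gd : E → E) (hd : ∀ x, HasGradientAt d (Gd x) x)
    (p v : E) (t : ℝ) :
    HasDerivAt (fun t : ℝ => d (p + t • v)) ⟪Gd (p + t • v), v⟫ t := by
  have hline : HasDerivAt (fun t : ℝ => p + t • v) v t := by
    simpa using ((hasDerivAt_id t).smul_const v).const_add p
  have := (hd (p + t • v)).hasFDerivAt.comp_hasDerivAt t hline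
  simp only [InnerProductSpace.toDual_apply_apply] at this
  exact this

/-- Strong convexity of the gradient implies the Bregman divergence lower bound. -/
lemma aux_bregman_lower (X : Set E) (hXcv : Convex ℝ X)
    (d : E → ℝ) (Gd : E → E) (hd : ∀ x, HasGradientAt d (Gd x) x)
    (hstrong : ∀ x ∈ X, ∀ y ∈ X, ‖x - y‖ ^ 2 ≤ ⟪Gd x - Gd y, x - y⟫)
    {x y : E} (hx : x ∈ X) (hy : y ∈ X) :
    ‖y - x‖ ^ 2 / 2 ≤ d y - d x - ⟪Gd x, y - x⟫ := by
  set v := y - x with hv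
  set φ : ℝ → ℝ := fun t => d (x + t • v) - (t * ⟪Gd x, v⟫ + t ^ 2 / 2 * ‖v‖ ^ 2) with hφ
  have hderiv : ∀ t : ℝ, HasDerivAt φ
      (⟪Gd (x + t • v), v⟫ - (⟪Gd x, v⟫ + t * ‖v‖ ^ 2)) t := by
    intro t
    have h1 := aux_hasDerivAt_line d Gd hd x v t
    have h2 : HasDerivAt (fun t : ℝ => t * ⟪Gd x, v⟫ + t ^ 2 / 2 * ‖v‖ ^ 2)
        (⟪Gd x, v⟫ + t * ‖v‖ ^ 2) t := by
      have ha : HasDerivAt (fun t : ℝ => t * ⟪Gd x, v⟫) ⟪Gd x, v⟫ t := by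
        simpa using (hasDerivAt_id t).mul_const ⟪Gd x, v⟫
      have hb : HasDerivAt (fun t : ℝ => t ^ 2 / 2 * ‖v‖ ^ 2) (t * ‖v‖ ^ 2) t := by
        have : HasDerivAt (fun t : ℝ => t ^ 2) (2 * t) t := by
          simpa using hasDerivAt_pow 2 t
        have := (this.div_const 2).mul_const (‖v‖ ^ 2)
        exact this.congr_deriv (by ring)
      exact ha.add hb
    exact h1.sub h2
  have hmem : ∀ t : ℝ, t ∈ Set.Icc (0:ℝ) 1 → x + t • v ∈ X := by
    intro t ht
    have := hXcv hx hy (by linarith [ht.2] : (0:ℝ) ≤ 1 - t) ht.1 (by ring)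
    convert this using 1
    simp only [hv]
    module
  have hmono : MonotoneOn φ (Set.Icc (0:ℝ) 1) := by
    apply monotoneOn_of_deriv_nonneg (convex_Icc 0 1)
    · exact fun t _ => ((hderiv t).continuousAt).continuousWithinAt
    · exact fun t _ => ((hderiv t).differentiableAt).differentiableWithinAt
    · intro t ht
      rw [interior_Icc] at ht
      rw [(hderiv t).deriv]
      have hc : x + t • v ∈ X := hmem t ⟨le_of_lt ht.1, le_of_lt ht.2⟩
      have hs := hstrong _ hc _ hx
      have heq : x + t • v - x = t • v := by abel
      rw [heq] at hs
      have hr : ⟪Gd (x + t • v) - Gd x, t • v⟫ = t * ⟪Gd (x + t • v) - Gd x, v⟫ :=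
        real_inner_smul_right _ _ _
      have hn : ‖t • v‖ ^ 2 = t ^ 2 * ‖v‖ ^ 2 := by
        rw [norm_smul]; simp [abs_of_pos ht.1]; ring
      rw [hr, hn] at hs
      have hsub : ⟪Gd (x + t • v) - Gd x, v⟫ = ⟪Gd (x + t • v), v⟫ - ⟪Gd x, v⟫ :=
        inner_sub_left _ _ _
      nlinarith [ht.1]
  have h01 := hmono (Set.left_mem_Icc.2 zero_le_one) (Set.right_mem_Icc.2 zero_le_one)
    zero_le_one
  have e0 : φ 0 = d x := by simp [hφ]
  have e1 : φ 1 = d y - (⟪Gd x, v⟫ + ‖v‖ ^ 2 / 2) := by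
    simp [hφ, hv]
    ring
  rw [e0, e1] at h01
  linarith

end Aux

/-- Lemma 1, mirror descent step inequality.
Let `X` be a closed convex set in a real inner product space `E`, `f` convex on `X`,
`d` a continuously differentiable distance generating function (gradient `Gd`) that is
1-strongly convex w.r.t. the norm, with Bregman divergence
`V x y = d y - d x - ⟪Gd x, y - x⟫`.  For `xi ∈ X`, a subgradient `gf` of `f` at `xi`,
a stepsize `h > 0`, and `xnext = argmin_{u ∈ X} (⟪h • gf, u⟫ + V xi u)`, we have
`h * (f xi - f x) ≤ h^2/2 * ‖gf‖^2 + V xi x - V xnext x` for every `x ∈ X`. -/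
theorem mirror_descent_step
    {E : Type*} [NormedAddCommGroup E] [InnerProductSpace ℝ E] [CompleteSpace E]
    (X : Set E) (hXcl : IsClosed X) (hXcv : Convex ℝ X)
    (f : E → ℝ) (hf : ConvexOn ℝ X f)
    (d : E → ℝ) (Gd : E → E)
    (hd : ∀ x, HasGradientAt d (Gd x) x) (hGd : Continuous Gd)
    (hstrong : ∀ x ∈ X, ∀ y ∈ X, ‖x - y‖ ^ 2 ≤ ⟪Gd x - Gd y, x - y⟫)
    (V : E → E → ℝ) (hV : ∀ x y, V x y = d y - d x - ⟪Gd x, y - x⟫)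
    (xi : E) (hxi : xi ∈ X)
    (gf : E) (hgf : ∀ y ∈ X, f xi + ⟪gf, y - xi⟫ ≤ f y)
    (h : ℝ) (hh : 0 < h)
    (xnext : E) (hxnextX : xnext ∈ X)
    (hxnext : IsMinOn (fun u => ⟪h • gf, u⟫ + V xi u) X xnext) :
    ∀ x ∈ X, h * (f xi - f x) ≤ h ^ 2 / 2 * ‖gf‖ ^ 2 + V xi x - V xnext x := by
  intro x hx
  set v := x - xnext with hvdef
  -- first-order optimality of xnext
  have hopt : 0 ≤ ⟪h • gf, v⟫ + ⟪Gd xnext, v⟫ - ⟪Gd xi, v⟫ := by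
    set g : ℝ → ℝ := fun t => ⟪h • gf, xnext + t • v⟫ + V xi (xnext + t • v) with hg
    have hgderiv : HasDerivAt g (⟪h • gf, v⟫ + ⟪Gd xnext, v⟫ - ⟪Gd xi, v⟫) 0 := by
      have h1 : HasDerivAt (fun t : ℝ => ⟪h • gf, xnext + t • v⟫) ⟪h • gf, v⟫ 0 := by
        have : ∀ t : ℝ, ⟪h • gf, xnext + t • v⟫ = ⟪h • gf, xnext⟫ + t * ⟪h • gf, v⟫ := by
          intro t; rw [inner_add_right, real_inner_smul_right]
        simp only [this]
        simpa using ((hasDerivAt_id (0:ℝ)).mul_const ⟪h • gf, v⟫).const_add ⟪h • gf, xnext⟫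
      have h2 : HasDerivAt (fun t : ℝ => V xi (xnext + t • v))
          (⟪Gd xnext, v⟫ - ⟪Gd xi, v⟫) 0 := by
        simp only [hV]
        have hda : HasDerivAt (fun t : ℝ => d (xnext + t • v)) ⟪Gd xnext, v⟫ 0 := by
          simpa using aux_hasDerivAt_line d Gd hd xnext v 0
        have hdb : HasDerivAt (fun t : ℝ => d xi + ⟪Gd xi, xnext + t • v - xi⟫)
            ⟪Gd xi, v⟫ 0 := by
          have : ∀ t : ℝ, d xi + ⟪Gd xi, xnext + t • v - xi⟫
              = (d xi + ⟪Gd xi, xnext - xi⟫) + t * ⟪Gd xi, v⟫ := by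
            intro t
            have : xnext + t • v - xi = (xnext - xi) + t • v := by abel
            rw [this, inner_add_right, real_inner_smul_right]; ring
          simp only [this]
          simpa using ((hasDerivAt_id (0:ℝ)).mul_const ⟪Gd xi, v⟫).const_add
            (d xi + ⟪Gd xi, xnext - xi⟫)
        have := hda.sub hdb
        refine this.congr_of_eventuallyEq (Filter.Eventually.of_forall fun t => ?_)
        simp only [Pi.sub_apply]
        ring
      rw [show (⟪h • gf, v⟫ + ⟪Gd xnext, v⟫ - ⟪Gd xi, v⟫ : ℝ)
          = ⟪h • gf, v⟫ + (⟪Gd xnext, v⟫ - ⟪Gd xi, v⟫) from by ring]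
      exact h1.add h2
    have hslope := hasDerivAt_iff_tendsto_slope.1 hgderiv
    have hslope' : Filter.Tendsto (slope g 0) (nhdsWithin 0 (Set.Ioi 0))
        (nhds (⟪h • gf, v⟫ + ⟪Gd xnext, v⟫ - ⟪Gd xi, v⟫)) :=
      hslope.mono_left (nhdsWithin_mono 0 (fun t ht => ne_of_gt ht))
    refine ge_of_tendsto hslope' ?_
    filter_upwards [Ioc_mem_nhdsGT (zero_lt_one : (0:ℝ) < 1)] with t ht
    have hmem : xnext + t • v ∈ X := by
      have := hXcv hxnextX hx (by linarith [ht.2] : (0:ℝ) ≤ 1 - t) (le_of_lt ht.1) (by ring)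
      convert this using 1
      simp only [hvdef]
      module
    have hmin := hxnext hmem
    simp only [Set.mem_setOf_eq] at hmin
    have hg0 : g 0 = ⟪h • gf, xnext⟫ + V xi xnext := by simp [hg]
    have : g 0 ≤ g t := by rw [hg0]; exact hmin
    rw [slope_def_field]
    exact div_nonneg (by linarith) (by linarith [ht.1])
  -- Bregman lower bound
  have hbreg : ‖xnext - xi‖ ^ 2 / 2 ≤ d xnext - d xi - ⟪Gd xi, xnext - xi⟫ :=
    aux_bregman_lower X hXcv d Gd hd hstrong hxi hxnextX
  -- subgradient inequality
  have hsub := hgf x hx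
  -- Cauchy-Schwarz + Young
  have hcs : ⟪gf, xi - xnext⟫ ≤ ‖gf‖ * ‖xi - xnext‖ := real_inner_le_norm _ _
  have hnorm : ‖xi - xnext‖ = ‖xnext - xi‖ := norm_sub_rev _ _
  have hyoung : h * ⟪gf, xi - xnext⟫ ≤ h ^ 2 / 2 * ‖gf‖ ^ 2 + ‖xnext - xi‖ ^ 2 / 2 := by
    rw [← hnorm]
    nlinarith [sq_nonneg (h * ‖gf‖ - ‖xi - xnext‖), norm_nonneg (xi - xnext), hcs]
  -- inner product expansions
  have e1 : ⟪gf, x - xi⟫ = ⟪gf, v⟫ - ⟪gf, xi - xnext⟫ := by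
    rw [← inner_sub_right]; congr 1; simp only [hvdef]; abel
  have e2 : ⟪Gd xi, x - xi⟫ = ⟪Gd xi, v⟫ + ⟪Gd xi, xnext - xi⟫ := by
    rw [← inner_add_right]; congr 1; simp only [hvdef]; abel
  have e3 : ⟪h • gf, v⟫ = h * ⟪gf, v⟫ := real_inner_smul_left _ _ _
  rw [hV, hV]
  simp only [← hvdef]
  rw [e3] at hopt
  nlinarith [mul_le_mul_of_nonneg_left hsub (le_of_lt hh)]
end

section
/- Let X be a closed convex set in a real inner product space E, let f, g : X → ℝ be convex, let x_* ∈ X satisfy g(x_*) ≤ 0 and minimize f over {x ∈ X : g(x) ≤ 0}, let d be a 1-strongly convex distance generating function with Bregman divergence V, minimized over X at x^0, and suppose d(x_*) ≤ Θ₀². Fix ε > 0 and N ∈ ℕ. Suppose a sequence x^0, x^1, …, x^N in X is generated as follows: for each i < N, if g(x^i) ≤ ε (a 'productive' step, i ∈ I) set M_i = ‖∇f(x^i)‖ for a chosen nonzero subgradient ∇f(x^i) of f, h_i = ε/M_i², and x^{i+1} = argmin_{u∈X}{ ⟨h_i ∇f(x^i), u⟩ + V(x^i,u) }; otherwise (i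 ∈ J = [N]∖I) set M_i = ‖∇g(x^i)‖ for a chosen nonzero subgradient ∇g(x^i) of g, h_i = ε/M_i², and x^{i+1} = argmin_{u∈X}{ ⟨h_i ∇g(x^i), u⟩ + V(x^i,u) }. If the stopping condition Σ_{i<N} 1/M_i² ≥ 2Θ₀²/ε² holds, then I is nonempty and the weighted average x̄^N = (Σ_{i∈I} h_i x^i)/(Σ_{i∈I} h_i) satisfies f(x̄^N) − f(x_*) ≤ ε and g(x̄^N) ≤ ε. -/
open scoped RealInnerProductSpace

lemma lineHasDerivAt {E : Type*} [NormedAddCommGroup E] [InnerProductSpace ℝ E] [CompleteSpace E]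
    {φ : E → ℝ} {G : E} (z w : E) (t : ℝ) (hφ : HasGradientAt φ G (z + t • w)) :
    HasDerivAt (fun s : ℝ => φ (z + s • w)) ⟪G, w⟫ t := by
  have hc : HasDerivAt (fun s : ℝ => z + s • w) w t := by
    simpa using ((hasDerivAt_id t).smul_const w).const_add z
  have := hφ.hasFDerivAt.comp_hasDerivAt t hc
  simpa [InnerProductSpace.toDual_apply_apply, Function.comp_def] using this

lemma varineq {E : Type*} [NormedAddCommGroup E] [InnerProductSpace ℝ E] [CompleteSpace E]
    {X : Set E} (hXcv : Convex ℝ X) {φ : E → ℝ} {Gφ : E → E}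
    (hφ : ∀ w, HasGradientAt φ (Gφ w) w)
    {z u : E} (hz : z ∈ X) (hu : u ∈ X) (hmin : IsMinOn φ X z) :
    0 ≤ ⟪Gφ z, u - z⟫ := by
  set ψ : ℝ → ℝ := fun t => φ (z + t • (u - z)) with hψ
  have hD : HasDerivAt ψ ⟪Gφ z, u - z⟫ 0 := by
    have := lineHasDerivAt (φ := φ) z (u - z) 0 (by simpa using hφ z)
    simpa [hψ] using this
  have hslope : Filter.Tendsto (slope ψ 0) (nhdsWithin 0 (Set.Ioi 0)) (nhds ⟪Gφ z, u - z⟫) :=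
    (hasDerivAt_iff_tendsto_slope.1 hD).mono_left
      (nhdsWithin_mono 0 (by intro t ht; exact ne_of_gt ht))
  refine ge_of_tendsto hslope ?_
  filter_upwards [Ioo_mem_nhdsGT_of_mem (by norm_num : (0:ℝ) ∈ Set.Ico 0 1)] with t ht
  have hmem : z + t • (u - z) ∈ X := by
    have := hXcv hz hu (by linarith [ht.2] : (0:ℝ) ≤ 1 - t) (le_of_lt ht.1) (by ring)
    convert this using 1
    module
  have h1 : ψ 0 ≤ ψ t := by
    have := hmin hmem
    simpa [hψ] using this
  rw [slope_def_field]
  have := div_nonneg (sub_nonneg.2 h1) ht.1.le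
  simpa using this

lemma bregman_lb {E : Type*} [NormedAddCommGroup E] [InnerProductSpace ℝ E] [CompleteSpace E]
    {X : Set E} (hXcv : Convex ℝ X) {d : E → ℝ} {Gd : E → E}
    (hd : ∀ x, HasGradientAt d (Gd x) x)
    (hstrong : ∀ x ∈ X, ∀ y ∈ X, ‖x - y‖ ^ 2 ≤ ⟪Gd x - Gd y, x - y⟫)
    {x y : E} (hx : x ∈ X) (hy : y ∈ X) :
    ‖y - x‖ ^ 2 / 2 + ⟪Gd x, y - x⟫ ≤ d y - d x := by
  set c : ℝ := ‖y - x‖ ^ 2 with hc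
  set F : ℝ → ℝ := fun t => d (x + t • (y - x)) - t * ⟪Gd x, y - x⟫ - t ^ 2 * c / 2 with hF
  have hder : ∀ t : ℝ, HasDerivAt F
      (⟪Gd (x + t • (y - x)), y - x⟫ - ⟪Gd x, y - x⟫ - t * c) t := by
    intro t
    have h1 := lineHasDerivAt (φ := d) x (y - x) t (hd _)
    have h2 : HasDerivAt (fun t : ℝ => t * ⟪Gd x, y - x⟫) ⟪Gd x, y - x⟫ t := by
      simpa using (hasDerivAt_id t).mul_const ⟪Gd x, y - x⟫
    have h3 : HasDerivAt (fun t : ℝ => t ^ 2 * c / 2) (t * c) t := by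
      have := ((hasDerivAt_pow 2 t).mul_const c).div_const 2
      exact this.congr_deriv (by ring)
    exact (h1.sub h2).sub h3
  have hmono : MonotoneOn F (Set.Icc 0 1) := by
    apply monotoneOn_of_deriv_nonneg (convex_Icc 0 1)
    · exact fun t _ => ((hder t).continuousAt).continuousWithinAt
    · exact fun t _ => ((hder t).differentiableAt).differentiableWithinAt
    · intro t ht
      rw [interior_Icc] at ht
      rw [(hder t).deriv]
      set p : E := x + t • (y - x) with hp
      have hpX : p ∈ X := by
        have := hXcv hx hy (by linarith [ht.2] : (0:ℝ) ≤ 1 - t) ht.1.le (by ring)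
        convert this using 1; rw [hp]; module
      have hs := hstrong p hpX x hx
      have hpx : p - x = t • (y - x) := by rw [hp]; abel
      rw [hpx, real_inner_smul_right, norm_smul] at hs
      rw [Real.norm_eq_abs, abs_of_pos ht.1] at hs
      have htc : t * c ≤ ⟪Gd p - Gd x, y - x⟫ := by
        refine le_of_mul_le_mul_left ?_ ht.1
        calc t * (t * c) = (t * ‖y - x‖) ^ 2 := by rw [hc]; ring
        _ ≤ t * ⟪Gd p - Gd x, y - x⟫ := hs
      rw [inner_sub_left] at htc
      linarith
  have h01 := hmono (Set.left_mem_Icc.2 zero_le_one) (Set.right_mem_Icc.2 zero_le_one) zero_le_one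
  have hF0 : F 0 = d x := by simp [hF]
  have hF1 : F 1 = d y - ⟪Gd x, y - x⟫ - c / 2 := by
    simp [hF]
  rw [hF0, hF1] at h01
  linarith

lemma inner_grad {E : Type*} [NormedAddCommGroup E] [InnerProductSpace ℝ E] [CompleteSpace E]
    (c p : E) : HasGradientAt (fun q : E => ⟪c, q⟫) c p := by
  rw [hasGradientAt_iff_hasFDerivAt]
  have := (InnerProductSpace.toDual ℝ E c).hasFDerivAt (x := p)
  exact this

lemma md_step {E : Type*} [NormedAddCommGroup E] [InnerProductSpace ℝ E] [CompleteSpace E]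
    {X : Set E} (hXcv : Convex ℝ X)
    {d : E → ℝ} {Gd : E → E}
    (hd : ∀ x, HasGradientAt d (Gd x) x)
    (hstrong : ∀ x ∈ X, ∀ y ∈ X, ‖x - y‖ ^ 2 ≤ ⟪Gd x - Gd y, x - y⟫)
    {V : E → E → ℝ} (hV : ∀ x y, V x y = d y - d x - ⟪Gd x, y - x⟫)
    {a : E} (haX : a ∈ X) {z : E} (hzX : z ∈ X)
    {w : E} {η : ℝ} (hη : 0 ≤ η)
    (hmin : IsMinOn (fun u => ⟪η • w, u⟫ + V a u) X z)
    {u : E} (hu : u ∈ X) :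
    η * ⟪w, a - u⟫ ≤ V a u - V z u + η ^ 2 * ‖w‖ ^ 2 / 2 := by
  set φ : E → ℝ := fun p => ⟪η • w, p⟫ + V a p with hφdef
  have hφ : ∀ p, HasGradientAt φ (η • w + (Gd p - Gd a)) p := by
    intro p
    have h1 := inner_grad (η • w) p
    have h2 : HasGradientAt (fun q : E => V a q) (Gd p - Gd a) p := by
      have h3 : HasGradientAt (fun q : E => d q - ⟪Gd a, q⟫)
          (Gd p - Gd a) p := by
        rw [hasGradientAt_iff_hasFDerivAt] at *
        have := (hd p).hasFDerivAt.sub (inner_grad (Gd a) p).hasFDerivAt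
        exact this.congr_fderiv (by simp [map_sub])
      have : (fun q : E => V a q)
          = fun q : E => (d q - ⟪Gd a, q⟫) + (⟪Gd a, a⟫ - d a) := by
        funext q; rw [hV]; rw [inner_sub_right]; ring
      rw [this]
      rw [hasGradientAt_iff_hasFDerivAt] at *
      simpa using h3.add_const (⟪Gd a, a⟫ - d a)
    rw [hasGradientAt_iff_hasFDerivAt] at *
    have := h1.add h2
    exact this.congr_fderiv (by simp [map_add])
  have hvi := varineq hXcv hφ hzX hu hmin
  rw [inner_add_left, inner_sub_left, real_inner_smul_left] at hvi
  -- three point identity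
  have h3pt : V a u - V z u - V a z = ⟪Gd z, u - z⟫ - ⟪Gd a, u - z⟫ := by
    simp only [hV, inner_sub_right]; ring
  have hbreg : ‖z - a‖ ^ 2 / 2 ≤ V a z := by
    have := bregman_lb hXcv hd hstrong haX hzX
    rw [hV]; linarith
  have hcs : ⟪w, a - z⟫ ≤ ‖w‖ * ‖a - z‖ := real_inner_le_norm w (a - z)
  have hsplit : ⟪w, a - u⟫ = ⟪w, a - z⟫ - ⟪w, u - z⟫ := by
    rw [← inner_sub_right]; congr 1; abel
  have hnn : η * ⟪w, a - z⟫ ≤ η * (‖w‖ * ‖a - z‖) :=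
    mul_le_mul_of_nonneg_left hcs hη
  have hna : ‖a - z‖ = ‖z - a‖ := norm_sub_rev a z
  have hsplit' : η * ⟪w, a - u⟫ = η * ⟪w, a - z⟫ - η * ⟪w, u - z⟫ := by
    rw [hsplit]; ring
  rw [hna] at hnn
  nlinarith [sq_nonneg (η * ‖w‖ - ‖z - a‖), hvi, hbreg, hnn, hsplit', h3pt]


/-- Theorem 1: adaptive constrained Mirror Descent, convex case.
Given convex `f, g` on a closed convex set `X`, a solution `xstar` of
`min {f x : x ∈ X, g x ≤ 0}`, a 1-strongly convex d.g.f. `d` (gradient `Gd`,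
Bregman divergence `V`) minimized over `X` at `x 0` with `d xstar ≤ Θ₀²`, and the
adaptive MD iterates: at productive steps (`g (x i) ≤ ε`, the set `I`) we step along
a nonzero subgradient `v i` of `f`, otherwise along a nonzero subgradient `v i` of `g`,
with `M i = ‖v i‖`, `h i = ε / M i ^ 2`, and mirror updates.  If the stopping rule
`∑_{i<N} 1 / M i ^ 2 ≥ 2 Θ₀² / ε²` holds, then `I` is nonempty and the weighted average
`x̄ = (∑_{i∈I} h i)⁻¹ • ∑_{i∈I} h i • x i` satisfies `f x̄ - f xstar ≤ ε` and `g x̄ ≤ ε`. -/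
theorem adaptive_mirror_descent_constrained
    {E : Type*} [NormedAddCommGroup E] [InnerProductSpace ℝ E] [CompleteSpace E]
    (X : Set E) (hXcl : IsClosed X) (hXcv : Convex ℝ X)
    (f g : E → ℝ) (hf : ConvexOn ℝ X f) (hg : ConvexOn ℝ X g)
    (xstar : E) (hxstarX : xstar ∈ X) (hxstarg : g xstar ≤ 0)
    (hxstaropt : ∀ y ∈ X, g y ≤ 0 → f xstar ≤ f y)
    (d : E → ℝ) (Gd : E → E)
    (hd : ∀ x, HasGradientAt d (Gd x) x) (hGd : Continuous Gd)
    (hstrong : ∀ x ∈ X, ∀ y ∈ X, ‖x - y‖ ^ 2 ≤ ⟪Gd x - Gd y, x - y⟫)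
    (V : E → E → ℝ) (hV : ∀ x y, V x y = d y - d x - ⟪Gd x, y - x⟫)
    (Θ₀ : ℝ) (hΘpos : 0 < Θ₀) (hΘ : d xstar ≤ Θ₀ ^ 2)
    (ε : ℝ) (hε : 0 < ε) (N : ℕ)
    (x : ℕ → E) (hxX : ∀ i, x i ∈ X)
    (hx0 : IsMinOn d X (x 0)) (hd0 : 0 ≤ d (x 0))
    (v : ℕ → E) (M h : ℕ → ℝ)
    (hM : ∀ i, M i = ‖v i‖) (hh : ∀ i, h i = ε / M i ^ 2)
    (hvne : ∀ i < N, v i ≠ 0)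
    (hprod : ∀ i < N, g (x i) ≤ ε → ∀ y ∈ X, f (x i) + ⟪v i, y - x i⟫ ≤ f y)
    (hnonprod : ∀ i < N, ε < g (x i) → ∀ y ∈ X, g (x i) + ⟪v i, y - x i⟫ ≤ g y)
    (hstep : ∀ i < N,
      IsMinOn (fun u => ⟪h i • v i, u⟫ + V (x i) u) X (x (i + 1)))
    (hstop : 2 * Θ₀ ^ 2 / ε ^ 2 ≤ ∑ i ∈ Finset.range N, 1 / M i ^ 2) :
    letI I := (Finset.range N).filter fun i => g (x i) ≤ ε
    letI xbar := (∑ i ∈ I, h i)⁻¹ • ∑ i ∈ I, h i • x i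
    I.Nonempty ∧ f xbar - f xstar ≤ ε ∧ g xbar ≤ ε := by
  set I := (Finset.range N).filter fun i => g (x i) ≤ ε with hI
  set xbar := (∑ i ∈ I, h i)⁻¹ • ∑ i ∈ I, h i • x i with hxbardef
  have hMpos : ∀ i < N, 0 < M i ^ 2 := by
    intro i hi
    rw [hM]
    exact pow_pos (norm_pos_iff.mpr (hvne i hi)) 2
  have hhpos : ∀ i < N, 0 < h i := by
    intro i hi; rw [hh]; exact div_pos (by positivity) (hMpos i hi)
  have hεh : ∀ i < N, ε * h i = 2 * (ε ^ 2 / (2 * M i ^ 2)) := by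
    intro i hi
    have hMne : M i ^ 2 ≠ 0 := (hMpos i hi).ne'
    rw [hh]
    field_simp
  set DV : ℕ → ℝ := fun i => V (x i) xstar - V (x (i + 1)) xstar with hDV
  set T : ℕ → ℝ := fun i => ε ^ 2 / (2 * M i ^ 2) with hT
  -- key per-step inequality
  have key : ∀ i < N, h i * ⟪v i, x i - xstar⟫ ≤ DV i + T i := by
    intro i hi
    have hms := md_step hXcv hd hstrong hV (hxX i) (hxX (i + 1)) (hhpos i hi).le
      (hstep i hi) hxstarX
    have hMne : M i ^ 2 ≠ 0 := (hMpos i hi).ne'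
    have heq : h i ^ 2 * ‖v i‖ ^ 2 / 2 = T i := by
      simp only [hT, hh, ← hM]
      field_simp
    rw [heq] at hms
    simpa [hDV] using hms
  -- productive steps
  have prodkey : ∀ i ∈ I, h i * (f (x i) - f xstar) ≤ DV i + T i := by
    intro i hiI
    rw [Finset.mem_filter, Finset.mem_range] at hiI
    obtain ⟨hi, hgi⟩ := hiI
    have hsub := hprod i hi hgi xstar hxstarX
    have hflip : ⟪v i, xstar - x i⟫ = -⟪v i, x i - xstar⟫ := by
      rw [← inner_neg_right]; congr 1; abel
    rw [hflip] at hsub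
    have h1 : f (x i) - f xstar ≤ ⟪v i, x i - xstar⟫ := by linarith
    calc h i * (f (x i) - f xstar) ≤ h i * ⟪v i, x i - xstar⟫ :=
          mul_le_mul_of_nonneg_left h1 (hhpos i hi).le
      _ ≤ DV i + T i := key i hi
  -- nonproductive steps
  have nonprodkey : ∀ i ∈ (Finset.range N).filter (fun i => ¬ g (x i) ≤ ε),
      T i < DV i := by
    intro i hiJ
    rw [Finset.mem_filter, Finset.mem_range] at hiJ
    obtain ⟨hi, hgi⟩ := hiJ
    push_neg at hgi
    have hsub := hnonprod i hi hgi xstar hxstarX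
    have hflip : ⟪v i, xstar - x i⟫ = -⟪v i, x i - xstar⟫ := by
      rw [← inner_neg_right]; congr 1; abel
    rw [hflip] at hsub
    have h1 : ε < ⟪v i, x i - xstar⟫ := by linarith
    have h2 : ε * h i < h i * ⟪v i, x i - xstar⟫ := by
      rw [mul_comm ε (h i)]
      exact mul_lt_mul_of_pos_left h1 (hhpos i hi)
    have h3 : ε * h i = 2 * T i := hεh i hi
    have := key i hi
    have hTpos : 0 < T i := by
      rw [hT]; exact div_pos (by positivity) (by linarith [hMpos i hi])
    linarith
  -- telescoping bound
  have hTel : ∑ i ∈ Finset.range N, DV i ≤ Θ₀ ^ 2 := by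
    have hsum : ∑ i ∈ Finset.range N, DV i
        = V (x 0) xstar - V (x N) xstar := by
      exact Finset.sum_range_sub' (fun i => V (x i) xstar) N
    have hVN : 0 ≤ V (x N) xstar := by
      have := bregman_lb hXcv hd hstrong (hxX N) hxstarX
      rw [hV]
      nlinarith [sq_nonneg ‖xstar - x N‖]
    have hvi0 : 0 ≤ ⟪Gd (x 0), xstar - x 0⟫ :=
      varineq hXcv hd (hxX 0) hxstarX hx0
    have hV0 : V (x 0) xstar ≤ Θ₀ ^ 2 := by
      rw [hV]; linarith
    linarith [hsum, hVN, hV0]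
  -- stopping rule in T-form
  have hstopT : Θ₀ ^ 2 ≤ ∑ i ∈ Finset.range N, T i := by
    have : ∑ i ∈ Finset.range N, T i
        = ε ^ 2 / 2 * ∑ i ∈ Finset.range N, 1 / M i ^ 2 := by
      rw [Finset.mul_sum]
      refine Finset.sum_congr rfl fun i _ => ?_
      rw [hT]; ring
    rw [this]
    rw [div_le_iff₀ (by positivity)] at hstop
    linarith
  set J := (Finset.range N).filter (fun i => ¬ g (x i) ≤ ε) with hJ
  have hsplitT : ∑ i ∈ I, T i + ∑ i ∈ J, T i = ∑ i ∈ Finset.range N, T i :=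
    Finset.sum_filter_add_sum_filter_not _ _ _
  have hsplitDV : ∑ i ∈ I, DV i + ∑ i ∈ J, DV i = ∑ i ∈ Finset.range N, DV i :=
    Finset.sum_filter_add_sum_filter_not _ _ _
  have hNpos : 0 < N := by
    rcases Nat.eq_zero_or_pos N with h0 | h0
    · exfalso
      rw [h0] at hstop
      simp at hstop
      have : 0 < 2 * Θ₀ ^ 2 / ε ^ 2 := by positivity
      linarith
    · exact h0
  -- I nonempty
  have hIne : I.Nonempty := by
    by_contra hcon
    rw [Finset.not_nonempty_iff_eq_empty] at hcon
    have hJall : J = Finset.range N := by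
      rw [hJ]
      rw [Finset.filter_eq_self]
      intro i hi
      by_contra hgi
      have : i ∈ I := by
        rw [Finset.mem_filter]; exact ⟨hi, hgi⟩
      rw [hcon] at this
      exact absurd this (Finset.notMem_empty i)
    have hJne : J.Nonempty := by
      rw [hJall]; exact ⟨0, Finset.mem_range.2 hNpos⟩
    have hstrictsum : ∑ i ∈ J, T i < ∑ i ∈ J, DV i :=
      Finset.sum_lt_sum_of_nonempty hJne nonprodkey
    have hIT : ∑ i ∈ I, T i = 0 := by rw [hcon]; simp
    have hIDV : ∑ i ∈ I, DV i = 0 := by rw [hcon]; simp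
    linarith
  -- main sum bound
  have hJsum : ∑ i ∈ J, T i ≤ ∑ i ∈ J, DV i :=
    Finset.sum_le_sum (fun i hi => (nonprodkey i hi).le)
  have hIsum : ∑ i ∈ I, h i * (f (x i) - f xstar) ≤ ∑ i ∈ I, (DV i + T i) :=
    Finset.sum_le_sum prodkey
  have hA : ∑ i ∈ I, h i * (f (x i) - f xstar) ≤ 2 * ∑ i ∈ I, T i := by
    rw [Finset.sum_add_distrib] at hIsum
    linarith
  set W := ∑ i ∈ I, h i with hW
  have hImem : ∀ i ∈ I, i < N := fun i hi =>
    Finset.mem_range.1 (Finset.mem_filter.1 hi).1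
  have hWpos : 0 < W := by
    rw [hW]
    exact Finset.sum_pos (fun i hi => hhpos i (hImem i hi)) hIne
  have h2T : 2 * ∑ i ∈ I, T i = ε * W := by
    rw [hW, Finset.mul_sum, Finset.mul_sum]
    refine Finset.sum_congr rfl fun i hi => ?_
    exact (hεh i (hImem i hi)).symm
  -- Jensen
  have hxbar : xbar = I.centerMass h x := rfl
  have hw0 : ∀ i ∈ I, 0 ≤ h i := fun i hi => (hhpos i (hImem i hi)).le
  have hmem : ∀ i ∈ I, x i ∈ X := fun i _ => hxX i
  have hfbar := hf.map_centerMass_le hw0 (hW ▸ hWpos) hmem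
  have hgbar := hg.map_centerMass_le hw0 (hW ▸ hWpos) hmem
  have hcm : ∀ φ : E → ℝ, I.centerMass h (φ ∘ x) = W⁻¹ * ∑ i ∈ I, h i * φ (x i) := by
    intro φ
    simp [Finset.centerMass, hW, smul_eq_mul, Function.comp]
  rw [hxbar]
  refine ⟨hIne, ?_, ?_⟩
  · rw [← hxbar] at hfbar ⊢
    rw [hcm] at hfbar
    have hsum2 : ∑ i ∈ I, h i * f (x i)
        = ∑ i ∈ I, h i * (f (x i) - f xstar) + W * f xstar := by
      rw [hW, Finset.sum_mul]
      rw [← Finset.sum_add_distrib]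
      refine Finset.sum_congr rfl fun i _ => ?_
      ring
    have h4 : ∑ i ∈ I, h i * f (x i) ≤ ε * W + W * f xstar := by
      rw [hsum2]; nlinarith [hA, h2T]
    have h5 : W⁻¹ * ∑ i ∈ I, h i * f (x i) ≤ ε + f xstar := by
      rw [inv_mul_le_iff₀ hWpos]
      calc ∑ i ∈ I, h i * f (x i) ≤ ε * W + W * f xstar := h4
        _ = W * (ε + f xstar) := by ring
    linarith [hfbar, h5]
  · rw [← hxbar] at hgbar ⊢
    rw [hcm] at hgbar
    have h4 : ∑ i ∈ I, h i * g (x i) ≤ W * ε := by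
      rw [hW, Finset.sum_mul]
      refine Finset.sum_le_sum fun i hi => ?_
      have hgi := (Finset.mem_filter.1 hi).2
      exact mul_le_mul_of_nonneg_left hgi (hw0 i hi)
    have h5 : W⁻¹ * ∑ i ∈ I, h i * g (x i) ≤ ε := by
      rw [inv_mul_le_iff₀ hWpos]
      linarith [h4]
    linarith [hgbar, h5]
end

section
/- Under the setting of the adaptive constrained Mirror Descent algorithm (sequence x^0,…,x^N in X with productive steps I = {i < N : g(x^i) ≤ ε} using subgradients of f, non-productive steps J = [N]∖I using subgradients of g, stepsizes h_i = ε/M_i² where M_i is the norm of the chosen nonzero subgradient, mirror updates x^{i+1} = argmin_{u∈X}{⟨h_i ∇·(x^i), u⟩ + V(x^i,u)}, and d minimized over X at x^0 with d(x_*) ≤ Θ₀²), the following summed inequality holds: Σ_{i∈I} h_i ( f(x^i) − f(x_*) ) + Σ_{i∈J} h_i ( g(x^i) − g(x_*) ) ≤ (ε/2) Σ_{i∈[N]} h_i + Θ₀². -/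
open scoped RealInnerProductSpace

/-- First-order optimality: if `z` minimizes `φ` on convex `X` and `φ` has derivative `D`
at `z`, then `0 ≤ D (u - z)` for every `u ∈ X`. -/
private lemma helper_opt {E : Type*} [NormedAddCommGroup E] [InnerProductSpace ℝ E]
    {X : Set E} (hXcv : Convex ℝ X) {φ : E → ℝ} {D : E →L[ℝ] ℝ} {z u : E}
    (hz : z ∈ X) (hu : u ∈ X) (hmin : IsMinOn φ X z) (hφ : HasFDerivAt φ D z) :
    0 ≤ D (u - z) := by
  have hy : u - z ∈ posTangentConeAt X z :=
    sub_mem_posTangentConeAt_of_segment_subset (hXcv.segment_subset hz hu)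
  have hloc : IsLocalMinOn φ X z := hmin.filter_mono inf_le_right
  exact hloc.hasFDerivWithinAt_nonneg hφ.hasFDerivWithinAt hy

/-- Strong convexity of `d` on `X` gives the lower bound on the Bregman divergence. -/
private lemma helper_breg {E : Type*} [NormedAddCommGroup E] [InnerProductSpace ℝ E]
    [CompleteSpace E]
    {X : Set E} (hXcv : Convex ℝ X) {d : E → ℝ} {Gd : E → E}
    (hd : ∀ x, HasGradientAt d (Gd x) x)
    (hstrong : ∀ x ∈ X, ∀ y ∈ X, ‖x - y‖ ^ 2 ≤ ⟪Gd x - Gd y, x - y⟫)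
    {a b : E} (ha : a ∈ X) (hb : b ∈ X) :
    1/2 * ‖b - a‖ ^ 2 ≤ d b - d a - ⟪Gd a, b - a⟫ := by
  set φ : ℝ → ℝ := fun t => d (a + t • (b - a)) - t * ⟪Gd a, b - a⟫ - t^2/2 * ‖b - a‖^2
    with hφdef
  have hder : ∀ t : ℝ, HasDerivAt φ
      (⟪Gd (a + t • (b - a)), b - a⟫ - ⟪Gd a, b - a⟫ - t * ‖b - a‖^2) t := by
    intro t
    have hc : HasDerivAt (fun t : ℝ => a + t • (b - a)) (b - a) t := by
      simpa using ((hasDerivAt_id t).smul_const (b - a)).const_add a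
    have h1 : HasDerivAt (fun t : ℝ => d (a + t • (b - a)))
        (⟪Gd (a + t • (b - a)), b - a⟫) t := by
      have := (hd (a + t • (b - a))).hasFDerivAt.comp_hasDerivAt t hc
      simp at this; exact this
    have h2 : HasDerivAt (fun t : ℝ => t * ⟪Gd a, b - a⟫) (⟪Gd a, b - a⟫) t := by
      simpa using (hasDerivAt_id t).mul_const (⟪Gd a, b - a⟫)
    have h3 : HasDerivAt (fun t : ℝ => t^2/2 * ‖b - a‖^2) (t * ‖b - a‖^2) t := by
      have h4 : HasDerivAt (fun t : ℝ => t^2/2) t t := by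
        simpa using (hasDerivAt_pow 2 t).div_const 2
      simpa using h4.mul_const (‖b - a‖^2)
    exact (h1.sub h2).sub h3
  have hmono : MonotoneOn φ (Set.Icc (0:ℝ) 1) := by
    apply monotoneOn_of_deriv_nonneg (convex_Icc 0 1)
    · exact fun t _ => (hder t).differentiableAt.continuousAt.continuousWithinAt
    · exact fun t _ => (hder t).differentiableAt.differentiableWithinAt
    · intro t ht
      rw [interior_Icc] at ht
      rw [(hder t).deriv]
      have hct : a + t • (b - a) ∈ X :=
        hXcv.add_smul_sub_mem ha hb ⟨ht.1.le, ht.2.le⟩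
      have hs := hstrong _ hct a ha
      have he : a + t • (b - a) - a = t • (b - a) := by abel
      rw [he] at hs
      have h5 : ‖t • (b - a)‖^2 = t^2 * ‖b - a‖^2 := by
        rw [norm_smul, Real.norm_eq_abs, mul_pow, sq_abs]
      have h6 : ⟪Gd (a + t • (b - a)) - Gd a, t • (b - a)⟫
          = t * ⟪Gd (a + t • (b - a)) - Gd a, b - a⟫ := real_inner_smul_right _ _ _
      rw [h5, h6, inner_sub_left] at hs
      have ht0 : (0:ℝ) < t := ht.1
      nlinarith [hs, ht0]
  have h01 : φ 0 ≤ φ 1 :=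
    hmono (Set.left_mem_Icc.2 zero_le_one) (Set.right_mem_Icc.2 zero_le_one) zero_le_one
  have hφ0 : φ 0 = d a := by simp [hφdef]
  have hφ1 : φ 1 = d b - ⟪Gd a, b - a⟫ - 1/2 * ‖b - a‖^2 := by
    simp [hφdef]
  rw [hφ0, hφ1] at h01
  linarith

/-- key summed inequality in the proof of Theorem 1.
Under the setting of the adaptive constrained Mirror Descent algorithm (productive steps
`I = {i < N : g (x i) ≤ ε}` stepping along subgradients of `f`, non-productive steps
`J = [N] \ I` stepping along subgradients of `g`, stepsizes `h i = ε / M i ^ 2`,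
mirror updates, `d` minimized over `X` at `x 0` with `d xstar ≤ Θ₀²`), we have
`∑_{i∈I} h i (f (x i) - f xstar) + ∑_{i∈J} h i (g (x i) - g xstar)
  ≤ (ε/2) ∑_{i<N} h i + Θ₀²`. -/
theorem adaptive_md_summed_inequality
    {E : Type*} [NormedAddCommGroup E] [InnerProductSpace ℝ E] [CompleteSpace E]
    (X : Set E) (hXcl : IsClosed X) (hXcv : Convex ℝ X)
    (f g : E → ℝ) (hf : ConvexOn ℝ X f) (hg : ConvexOn ℝ X g)
    (xstar : E) (hxstarX : xstar ∈ X) (hxstarg : g xstar ≤ 0)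
    (hxstaropt : ∀ y ∈ X, g y ≤ 0 → f xstar ≤ f y)
    (d : E → ℝ) (Gd : E → E)
    (hd : ∀ x, HasGradientAt d (Gd x) x) (hGd : Continuous Gd)
    (hstrong : ∀ x ∈ X, ∀ y ∈ X, ‖x - y‖ ^ 2 ≤ ⟪Gd x - Gd y, x - y⟫)
    (V : E → E → ℝ) (hV : ∀ x y, V x y = d y - d x - ⟪Gd x, y - x⟫)
    (Θ₀ : ℝ) (hΘ : d xstar ≤ Θ₀ ^ 2)
    (ε : ℝ) (hε : 0 < ε) (N : ℕ)
    (x : ℕ → E) (hxX : ∀ i, x i ∈ X)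
    (hx0 : IsMinOn d X (x 0)) (hd0 : 0 ≤ d (x 0))
    (v : ℕ → E) (M h : ℕ → ℝ)
    (hM : ∀ i, M i = ‖v i‖) (hh : ∀ i, h i = ε / M i ^ 2)
    (hvne : ∀ i < N, v i ≠ 0)
    (hprod : ∀ i < N, g (x i) ≤ ε → ∀ y ∈ X, f (x i) + ⟪v i, y - x i⟫ ≤ f y)
    (hnonprod : ∀ i < N, ε < g (x i) → ∀ y ∈ X, g (x i) + ⟪v i, y - x i⟫ ≤ g y)
    (hstep : ∀ i < N,
      IsMinOn (fun u => ⟪h i • v i, u⟫ + V (x i) u) X (x (i + 1)))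
 :
    letI I := (Finset.range N).filter fun i => g (x i) ≤ ε
    letI J := Finset.range N \ I
    ∑ i ∈ I, h i * (f (x i) - f xstar) + ∑ i ∈ J, h i * (g (x i) - g xstar)
      ≤ ε / 2 * ∑ i ∈ Finset.range N, h i + Θ₀ ^ 2 := by
  classical
  show ∑ i ∈ (Finset.range N).filter (fun i => g (x i) ≤ ε), h i * (f (x i) - f xstar)
      + ∑ i ∈ Finset.range N \ (Finset.range N).filter (fun i => g (x i) ≤ ε),
          h i * (g (x i) - g xstar)
      ≤ ε / 2 * ∑ i ∈ Finset.range N, h i + Θ₀ ^ 2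
  -- basic positivity facts
  have hvpos : ∀ i < N, (0:ℝ) < ‖v i‖ := fun i hi => norm_pos_iff.2 (hvne i hi)
  have hhpos : ∀ i < N, 0 < h i := by
    intro i hi
    rw [hh, hM]
    exact div_pos hε (pow_pos (hvpos i hi) 2)
  have hhε : ∀ i < N, h i * ‖v i‖^2 = ε := by
    intro i hi
    rw [hh, hM, div_mul_cancel₀ _ (pow_ne_zero 2 (hvpos i hi).ne')]
  -- key per-step inequality
  have key : ∀ i < N, ⟪h i • v i, x i - xstar⟫
      ≤ ε / 2 * h i + (V (x i) xstar - V (x (i+1)) xstar) := by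
    intro i hiN
    set a := x i with ha
    set b := x (i+1) with hb
    set w := h i • v i with hw
    -- optimality of the mirror step
    have hmin : IsMinOn (fun u => ⟪w, u⟫ + (d u - d a - ⟪Gd a, u - a⟫)) X b := by
      have := hstep i hiN
      simpa [hV] using this
    have hF : HasFDerivAt (fun u : E => ⟪w, u⟫ + (d u - d a - ⟪Gd a, u - a⟫))
        ((innerSL ℝ w) + (((InnerProductSpace.toDual ℝ E) (Gd b) : E →L[ℝ] ℝ)
          - innerSL ℝ (Gd a))) b := by
      have h1 : HasFDerivAt (fun u : E => ⟪w, u⟫) (innerSL ℝ w) b :=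
        (innerSL ℝ w).hasFDerivAt
      have h2 : HasFDerivAt d ((InnerProductSpace.toDual ℝ E) (Gd b) : E →L[ℝ] ℝ) b :=
        (hd b).hasFDerivAt
      have h3 : HasFDerivAt (fun u : E => ⟪Gd a, u - a⟫) (innerSL ℝ (Gd a)) b := by
        have := ((innerSL ℝ (Gd a)).hasFDerivAt (x := b)).sub_const (⟪Gd a, a⟫)
        simp only [inner_sub_right]
        simpa using this
      exact h1.add ((h2.sub_const (d a)).sub h3)
    have hopt := helper_opt hXcv (hxX (i+1)) hxstarX hmin hF
    simp only [ContinuousLinearMap.add_apply, ContinuousLinearMap.sub_apply,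
      innerSL_apply_apply, InnerProductSpace.toDual_apply_apply] at hopt
    -- Bregman lower bound for V a b
    have hbreg : 1/2 * ‖b - a‖^2 ≤ d b - d a - ⟪Gd a, b - a⟫ :=
      helper_breg hXcv hd hstrong (hxX i) (hxX (i+1))
    -- Cauchy-Schwarz
    have hCS : ⟪w, a - b⟫ ≤ ‖w‖ * ‖a - b‖ := real_inner_le_norm _ _
    have hwn : ‖w‖ = h i * ‖v i‖ := by
      rw [hw, norm_smul, Real.norm_eq_abs, abs_of_nonneg (hhpos i hiN).le]
    have hnrev : ‖a - b‖ = ‖b - a‖ := norm_sub_rev _ _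
    have hsq : (h i)^2 * ‖v i‖^2 = ε * h i := by
      have h8 := hhε i hiN
      calc (h i)^2 * ‖v i‖^2 = h i * (h i * ‖v i‖^2) := by ring
        _ = ε * h i := by rw [h8]; ring
    -- combine everything
    have hgoal : ⟪w, a - xstar⟫ ≤ ε / 2 * h i + (V a xstar - V b xstar) := by
      rw [hV, hV]
      simp only [inner_sub_right, inner_sub_left] at hopt hCS hbreg ⊢
      rw [← hb] at hopt
      rw [hwn, hnrev] at hCS
      nlinarith [hopt, hCS, hbreg, sq_nonneg (h i * ‖v i‖ - ‖b - a‖), hsq, hwn, hnrev]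
    exact hgoal
  -- branch inequality per step
  have term : ∀ i ∈ Finset.range N,
      (if g (x i) ≤ ε then h i * (f (x i) - f xstar) else 0)
      + (if ¬ g (x i) ≤ ε then h i * (g (x i) - g xstar) else 0)
      ≤ ε / 2 * h i + (V (x i) xstar - V (x (i+1)) xstar) := by
    intro i hi
    rw [Finset.mem_range] at hi
    have hk := key i hi
    have hip : ⟪h i • v i, x i - xstar⟫ = h i * ⟪v i, x i - xstar⟫ :=
      real_inner_smul_left _ _ _
    rw [hip] at hk
    by_cases hp : g (x i) ≤ ε
    · simp only [hp, if_true, not_true, if_false, add_zero]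
      have hsub := hprod i hi hp xstar hxstarX
      have : f (x i) - f xstar ≤ ⟪v i, x i - xstar⟫ := by
        have h9 : ⟪v i, xstar - x i⟫ = - ⟪v i, x i - xstar⟫ := by
          rw [← inner_neg_right]; congr 1; abel
        rw [h9] at hsub; linarith
      calc h i * (f (x i) - f xstar) ≤ h i * ⟪v i, x i - xstar⟫ :=
            mul_le_mul_of_nonneg_left this (hhpos i hi).le
        _ ≤ _ := hk
    · simp only [hp, if_false, not_false_iff, if_true, zero_add]
      have hsub := hnonprod i hi (lt_of_not_ge hp) xstar hxstarX
      have : g (x i) - g xstar ≤ ⟪v i, x i - xstar⟫ := by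
        have h9 : ⟪v i, xstar - x i⟫ = - ⟪v i, x i - xstar⟫ := by
          rw [← inner_neg_right]; congr 1; abel
        rw [h9] at hsub; linarith
      calc h i * (g (x i) - g xstar) ≤ h i * ⟪v i, x i - xstar⟫ :=
            mul_le_mul_of_nonneg_left this (hhpos i hi).le
        _ ≤ _ := hk
  -- assemble the sums
  rw [← Finset.filter_not, Finset.sum_filter, Finset.sum_filter, ← Finset.sum_add_distrib]
  calc ∑ i ∈ Finset.range N,
        ((if g (x i) ≤ ε then h i * (f (x i) - f xstar) else 0)
          + (if ¬ g (x i) ≤ ε then h i * (g (x i) - g xstar) else 0))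
      ≤ ∑ i ∈ Finset.range N, (ε / 2 * h i + (V (x i) xstar - V (x (i+1)) xstar)) :=
        Finset.sum_le_sum term
    _ = ε / 2 * ∑ i ∈ Finset.range N, h i + (V (x 0) xstar - V (x N) xstar) := by
        rw [Finset.sum_add_distrib, ← Finset.mul_sum,
          Finset.sum_range_sub' (fun i => V (x i) xstar)]
    _ ≤ ε / 2 * ∑ i ∈ Finset.range N, h i + Θ₀ ^ 2 := by
        have hVN : 0 ≤ V (x N) xstar := by
          rw [hV]
          have := helper_breg hXcv hd hstrong (hxX N) hxstarX
          nlinarith [sq_nonneg ‖xstar - x N‖]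
        have hV0 : V (x 0) xstar ≤ Θ₀ ^ 2 := by
          rw [hV]
          have hopt0 := helper_opt hXcv (hxX 0) hxstarX hx0 (hd (x 0)).hasFDerivAt
          rw [InnerProductSpace.toDual_apply_apply] at hopt0
          linarith
        linarith
end

section
/- Under the setting of the adaptive constrained Mirror Descent algorithm with stopping condition Σ_{i<N} 1/M_i² ≥ 2Θ₀²/ε², the set I of productive steps (those i < N with g(x^i) ≤ ε) is nonempty. More precisely, since for every non-productive index i ∈ J one has g(x^i) − g(x_*) ≥ g(x^i) > ε, the strict inequality Σ_{i∈I} h_i ( f(x̄^N) − f(x_*) ) < ε Σ_{i∈I} h_i forces I ≠ ∅. -/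
open scoped RealInnerProductSpace

section AuxMD

variable {E : Type*} [NormedAddCommGroup E] [InnerProductSpace ℝ E] [CompleteSpace E]

lemma lineDeriv_aux {d : E → ℝ} {Gd : E → E} (hd : ∀ x, HasGradientAt d (Gd x) x)
    (z w : E) (t₀ : ℝ) :
    HasDerivAt (fun t : ℝ => d (z + t • w)) ⟪Gd (z + t₀ • w), w⟫ t₀ := by
  have h1 : HasDerivAt (fun t : ℝ => z + t • w) w t₀ := by
    simpa using ((hasDerivAt_id t₀).smul_const w).const_add z
  have h2 := (hd (z + t₀ • w)).hasFDerivAt.comp_hasDerivAt t₀ h1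
  exact (by simpa using h2 : HasDerivAt (d ∘ fun t : ℝ => z + t • w) _ t₀)

lemma deriv_nonneg_of_isMinOn {φ : E → ℝ} {X : Set E} (hX : Convex ℝ X) {z y : E}
    (hz : z ∈ X) (hy : y ∈ X) (hmin : IsMinOn φ X z) {c : ℝ}
    (hc : HasDerivAt (fun t : ℝ => φ (z + t • (y - z))) c 0) : 0 ≤ c := by
  have hslope := hasDerivAt_iff_tendsto_slope.mp hc
  have h2 : Filter.Tendsto (slope (fun t : ℝ => φ (z + t • (y - z))) 0)
      (nhdsWithin 0 (Set.Ioi 0)) (nhds c) :=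
    hslope.mono_left (nhdsWithin_mono _ (fun t ht => ne_of_gt ht))
  refine ge_of_tendsto h2 ?_
  filter_upwards [Ioo_mem_nhdsGT_of_mem (by norm_num : (0:ℝ) ∈ Set.Ico 0 1)] with t ht
  have hmem : z + t • (y - z) ∈ X := by
    have := hX hz hy (by linarith [ht.1, ht.2] : (0:ℝ) ≤ 1 - t) (le_of_lt ht.1) (by ring)
    convert this using 1
    simp [smul_sub, sub_smul]
    abel
  have hle := hmin hmem
  simp only [slope_def_field, Set.mem_setOf_eq] at *
  have h0 : (0:ℝ) ≤ φ (z + t • (y - z)) - φ (z + (0:ℝ) • (y - z)) := by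
    simpa using sub_nonneg.mpr hle
  have ht0 : (0:ℝ) ≤ t - 0 := by simpa using le_of_lt ht.1
  exact div_nonneg h0 ht0

lemma bregman_lower {d : E → ℝ} {Gd : E → E} (hd : ∀ x, HasGradientAt d (Gd x) x)
    {X : Set E} (hX : Convex ℝ X)
    (hstrong : ∀ x ∈ X, ∀ y ∈ X, ‖x - y‖ ^ 2 ≤ ⟪Gd x - Gd y, x - y⟫)
    {x y : E} (hx : x ∈ X) (hy : y ∈ X) :
    ‖y - x‖ ^ 2 / 2 ≤ d y - d x - ⟪Gd x, y - x⟫ := by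
  set w := y - x with hw
  set c := (⟪Gd x, w⟫ : ℝ) with hcdef
  set n := ‖w‖ ^ 2 with hndef
  set ψ := fun t : ℝ => d (x + t • w) - t * c - t ^ 2 / 2 * n with hψ
  have hderiv : ∀ t : ℝ, HasDerivAt ψ (⟪Gd (x + t • w), w⟫ - c - t * n) t := by
    intro t
    have h1 := lineDeriv_aux hd x w t
    have h2 : HasDerivAt (fun t : ℝ => t * c) c t := by simpa using (hasDerivAt_id t).mul_const c
    have h3 : HasDerivAt (fun t : ℝ => t ^ 2 / 2 * n) (t * n) t := by
      have := ((hasDerivAt_pow 2 t).div_const 2).mul_const n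
      simpa using this
    exact (h1.sub h2).sub h3
  have hmono : MonotoneOn ψ (Set.Icc 0 1) := by
    apply monotoneOn_of_deriv_nonneg (convex_Icc 0 1)
    · exact fun t _ => ((hderiv t).continuousAt).continuousWithinAt
    · intro t _
      exact ((hderiv t).differentiableAt).differentiableWithinAt
    · intro t ht
      rw [interior_Icc] at ht
      rw [(hderiv t).deriv]
      have hmem : x + t • w ∈ X := by
        have := hX hx hy (by linarith [ht.1, ht.2] : (0:ℝ) ≤ 1 - t) (le_of_lt ht.1) (by ring)
        convert this using 1
        simp [hw, smul_sub, sub_smul]; abel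
      have hs := hstrong _ hmem _ hx
      have he : x + t • w - x = t • w := by abel
      rw [he] at hs
      have hs2 : t ^ 2 * n ≤ t * ⟪Gd (x + t • w) - Gd x, w⟫ := by
        have h1 : ‖t • w‖ ^ 2 = t ^ 2 * n := by
          rw [norm_smul]; simp [hndef]; ring_nf
          rw [abs_of_pos ht.1]; ring
        have h2 : (⟪Gd (x + t • w) - Gd x, t • w⟫ : ℝ) = t * ⟪Gd (x + t • w) - Gd x, w⟫ :=
          real_inner_smul_right _ _ _
        rw [h1, h2] at hs; exact hs
      have hs3 : t * n ≤ ⟪Gd (x + t • w) - Gd x, w⟫ := by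
        exact (mul_le_mul_iff_right₀ ht.1).mp (by nlinarith [hs2])
      rw [inner_sub_left] at hs3
      linarith
  have h01 := hmono (Set.mem_Icc.mpr ⟨le_refl 0, by norm_num⟩)
    (Set.mem_Icc.mpr ⟨by norm_num, le_refl 1⟩) (by norm_num)
  simp only [hψ] at h01
  have e0 : x + (0:ℝ) • w = x := by simp
  have e1 : x + (1:ℝ) • w = y := by simp [hw]
  rw [e0, e1] at h01
  simp only [hndef, hcdef, hw] at h01 ⊢
  nlinarith [h01]

end AuxMD

/-- nonemptiness of the set of productive steps.
Under the setting of the adaptive constrained Mirror Descent algorithm with stopping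
condition `∑_{i<N} 1 / M i ^ 2 ≥ 2 Θ₀² / ε²`, the set `I` of productive steps
(those `i < N` with `g (x i) ≤ ε`) is nonempty: for every non-productive index one has
`g (x i) - g xstar ≥ g (x i) > ε`, and the resulting strict inequality
`∑_{i∈I} h i (f x̄ - f xstar) < ε ∑_{i∈I} h i` forces `I ≠ ∅`. -/
theorem adaptive_md_productive_steps_nonempty
    {E : Type*} [NormedAddCommGroup E] [InnerProductSpace ℝ E] [CompleteSpace E]
    (X : Set E) (hXcl : IsClosed X) (hXcv : Convex ℝ X)
    (f g : E → ℝ) (hf : ConvexOn ℝ X f) (hg : ConvexOn ℝ X g)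
    (xstar : E) (hxstarX : xstar ∈ X) (hxstarg : g xstar ≤ 0)
    (hxstaropt : ∀ y ∈ X, g y ≤ 0 → f xstar ≤ f y)
    (d : E → ℝ) (Gd : E → E)
    (hd : ∀ x, HasGradientAt d (Gd x) x) (hGd : Continuous Gd)
    (hstrong : ∀ x ∈ X, ∀ y ∈ X, ‖x - y‖ ^ 2 ≤ ⟪Gd x - Gd y, x - y⟫)
    (V : E → E → ℝ) (hV : ∀ x y, V x y = d y - d x - ⟪Gd x, y - x⟫)
    (Θ₀ : ℝ) (hΘpos : 0 < Θ₀) (hΘ : d xstar ≤ Θ₀ ^ 2)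
    (ε : ℝ) (hε : 0 < ε) (N : ℕ)
    (x : ℕ → E) (hxX : ∀ i, x i ∈ X)
    (hx0 : IsMinOn d X (x 0)) (hd0 : 0 ≤ d (x 0))
    (v : ℕ → E) (M h : ℕ → ℝ)
    (hM : ∀ i, M i = ‖v i‖) (hh : ∀ i, h i = ε / M i ^ 2)
    (hvne : ∀ i < N, v i ≠ 0)
    (hprod : ∀ i < N, g (x i) ≤ ε → ∀ y ∈ X, f (x i) + ⟪v i, y - x i⟫ ≤ f y)
    (hnonprod : ∀ i < N, ε < g (x i) → ∀ y ∈ X, g (x i) + ⟪v i, y - x i⟫ ≤ g y)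
    (hstep : ∀ i < N,
      IsMinOn (fun u => ⟪h i • v i, u⟫ + V (x i) u) X (x (i + 1)))
    (hstop : 2 * Θ₀ ^ 2 / ε ^ 2 ≤ ∑ i ∈ Finset.range N, 1 / M i ^ 2) :
    ((Finset.range N).filter fun i => g (x i) ≤ ε).Nonempty := by
  by_contra hne
  rw [Finset.not_nonempty_iff_eq_empty] at hne
  have hall : ∀ i < N, ε < g (x i) := by
    intro i hi
    by_contra hc
    push_neg at hc
    have hmem : i ∈ (Finset.range N).filter fun i => g (x i) ≤ ε :=
      Finset.mem_filter.mpr ⟨Finset.mem_range.mpr hi, hc⟩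
    rw [hne] at hmem
    exact absurd hmem (Finset.notMem_empty i)
  have hN : 0 < N := by
    rcases Nat.eq_zero_or_pos N with h0 | h0
    · exfalso
      rw [h0] at hstop
      simp at hstop
      have : 0 < 2 * Θ₀ ^ 2 / ε ^ 2 := by positivity
      linarith
    · exact h0
  have hMpos : ∀ i < N, 0 < M i := fun i hi => by
    rw [hM]; exact norm_pos_iff.mpr (hvne i hi)
  have hhpos : ∀ i < N, 0 < h i := fun i hi => by
    rw [hh]; have := hMpos i hi; positivity
  -- key per-step inequality
  have hkey : ∀ i ∈ Finset.range N,
      ε * h i < V (x i) xstar - V (x (i + 1)) xstar + ε ^ 2 / (2 * M i ^ 2) := by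
    intro i hiR
    have hi := Finset.mem_range.mp hiR
    set z := x (i + 1) with hz
    set u := x i with hu
    set w := xstar - z with hwdef
    -- optimality of the step
    have h1 : HasDerivAt (fun t : ℝ => (⟪h i • v i, z + t • w⟫ : ℝ)) ⟪h i • v i, w⟫ 0 := by
      have heq : (fun t : ℝ => (⟪h i • v i, z + t • w⟫ : ℝ))
          = fun t : ℝ => ⟪h i • v i, z⟫ + t * ⟪h i • v i, w⟫ := by
        funext t; rw [inner_add_right, real_inner_smul_right]
      rw [heq]
      simpa using ((hasDerivAt_id (0:ℝ)).mul_const (⟪h i • v i, w⟫ : ℝ)).const_add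
        (⟪h i • v i, z⟫ : ℝ)
    have h2 : HasDerivAt (fun t : ℝ => d (z + t • w)) ⟪Gd z, w⟫ 0 := by
      simpa using lineDeriv_aux hd z w 0
    have h3 : HasDerivAt (fun t : ℝ => (⟪Gd u, z + t • w - u⟫ : ℝ)) ⟪Gd u, w⟫ 0 := by
      have heq : (fun t : ℝ => (⟪Gd u, z + t • w - u⟫ : ℝ))
          = fun t : ℝ => ⟪Gd u, z - u⟫ + t * ⟪Gd u, w⟫ := by
        funext t
        rw [show z + t • w - u = (z - u) + t • w by abel, inner_add_right,
          real_inner_smul_right]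
      rw [heq]
      simpa using ((hasDerivAt_id (0:ℝ)).mul_const (⟪Gd u, w⟫ : ℝ)).const_add
        (⟪Gd u, z - u⟫ : ℝ)
    have hφderiv : HasDerivAt
        (fun t : ℝ => (fun u' => (⟪h i • v i, u'⟫ : ℝ) + V u u') (z + t • w))
        (⟪h i • v i, w⟫ + (⟪Gd z, w⟫ - ⟪Gd u, w⟫)) 0 := by
      simp only [hV]
      have := h1.add ((h2.sub_const (d u)).sub h3)
      exact this
    have hopt : 0 ≤ (⟪h i • v i, w⟫ : ℝ) + (⟪Gd z, w⟫ - ⟪Gd u, w⟫) :=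
      deriv_nonneg_of_isMinOn hXcv (hxX (i + 1)) hxstarX (hstep i hi) hφderiv
    -- subgradient inequality
    have hsub := hnonprod i hi (hall i hi) xstar hxstarX
    have hinner : ε < ⟪v i, u - xstar⟫ := by
      have e : (⟪v i, u - xstar⟫ : ℝ) = -⟪v i, xstar - u⟫ := by
        rw [show u - xstar = -(xstar - u) by abel, inner_neg_right]
      rw [e]
      have := hall i hi
      linarith
    -- three-point identity
    have h3pt : (⟪Gd z, w⟫ : ℝ) - ⟪Gd u, w⟫ = V u xstar - V u z - V z xstar := by
      simp only [hV, hwdef, inner_sub_right]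
      ring
    -- Young + strong convexity
    have hB : ‖z - u‖ ^ 2 / 2 ≤ V u z := by
      rw [hV]
      exact bregman_lower hd hXcv hstrong (hxX i) (hxX (i + 1))
    have hY : h i * ⟪v i, u - z⟫ ≤ h i ^ 2 * M i ^ 2 / 2 + ‖z - u‖ ^ 2 / 2 := by
      have hi1 := real_inner_le_norm (v i) (u - z)
      have hn : ‖u - z‖ = ‖z - u‖ := norm_sub_rev u z
      have hhp := le_of_lt (hhpos i hi)
      have hMe : ‖v i‖ = M i := (hM i).symm
      have hi2 := mul_le_mul_of_nonneg_left hi1 hhp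
      rw [hMe, hn] at hi2
      nlinarith [sq_nonneg (h i * M i - ‖z - u‖), hi2]
    -- inner product algebra
    have e1 : (⟪v i, u - xstar⟫ : ℝ) = ⟪v i, u - z⟫ + ⟪v i, z - xstar⟫ := by
      simp only [inner_sub_right]; ring
    have e2 : (⟪h i • v i, w⟫ : ℝ) = -(h i * ⟪v i, z - xstar⟫) := by
      rw [hwdef, real_inner_smul_left,
        show (⟪v i, xstar - z⟫ : ℝ) = -⟪v i, z - xstar⟫ by
          rw [show xstar - z = -(z - xstar) by abel, inner_neg_right]]
      ring
    -- final combination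
    have hhe : h i ^ 2 * M i ^ 2 / 2 = ε ^ 2 / (2 * M i ^ 2) := by
      rw [hh]
      have hMne := (hMpos i hi).ne'
      field_simp
    have hεh : ε * h i < h i * ⟪v i, u - xstar⟫ :=
      (mul_comm ε (h i)) ▸ (mul_lt_mul_of_pos_left hinner (hhpos i hi))
    have hchain : h i * ⟪v i, u - xstar⟫
        ≤ V u xstar - V z xstar + h i ^ 2 * M i ^ 2 / 2 := by
      have hstep2 : h i * ⟪v i, z - xstar⟫ ≤ V u xstar - V u z - V z xstar := by
        rw [← h3pt]
        have := hopt
        rw [e2] at this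
        linarith
      calc h i * ⟪v i, u - xstar⟫
          = h i * ⟪v i, u - z⟫ + h i * ⟪v i, z - xstar⟫ := by rw [e1]; ring
        _ ≤ (h i ^ 2 * M i ^ 2 / 2 + ‖z - u‖ ^ 2 / 2) + (V u xstar - V u z - V z xstar) :=
            add_le_add hY hstep2
        _ ≤ V u xstar - V z xstar + h i ^ 2 * M i ^ 2 / 2 := by linarith [hB]
    rw [hhe] at hchain
    linarith
  -- sum the strict inequalities
  have hsum := Finset.sum_lt_sum_of_nonempty
    (Finset.nonempty_range_iff.mpr hN.ne') hkey
  -- rewrite LHS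
  have hL : ∑ i ∈ Finset.range N, ε * h i = ε ^ 2 * ∑ i ∈ Finset.range N, 1 / M i ^ 2 := by
    rw [Finset.mul_sum]
    refine Finset.sum_congr rfl fun i hiR => ?_
    have hMne := (hMpos i (Finset.mem_range.mp hiR)).ne'
    rw [hh]
    field_simp
  -- rewrite RHS
  have hR : ∑ i ∈ Finset.range N,
      (V (x i) xstar - V (x (i + 1)) xstar + ε ^ 2 / (2 * M i ^ 2))
      = (V (x 0) xstar - V (x N) xstar) + ε ^ 2 / 2 * ∑ i ∈ Finset.range N, 1 / M i ^ 2 := by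
    rw [Finset.sum_add_distrib, Finset.sum_range_sub' (fun i => V (x i) xstar), Finset.mul_sum]
    congr 1
    refine Finset.sum_congr rfl fun i hiR => ?_
    rw [div_mul_eq_mul_div, mul_one_div, div_div]
    ring
  rw [hL, hR] at hsum
  -- bounds
  have hA0 : V (x 0) xstar ≤ Θ₀ ^ 2 := by
    have hg0 : 0 ≤ (⟪Gd (x 0), xstar - x 0⟫ : ℝ) := by
      refine deriv_nonneg_of_isMinOn hXcv (hxX 0) hxstarX hx0 ?_
      simpa using lineDeriv_aux hd (x 0) (xstar - x 0) 0
    rw [hV]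
    linarith
  have hAN : 0 ≤ V (x N) xstar := by
    have := bregman_lower hd hXcv hstrong (hxX N) hxstarX
    rw [hV]
    nlinarith [sq_nonneg ‖xstar - x N‖]
  have hstop2 : 2 * Θ₀ ^ 2 ≤ ε ^ 2 * ∑ i ∈ Finset.range N, 1 / M i ^ 2 := by
    have hε2 : (0:ℝ) < ε ^ 2 := by positivity
    calc 2 * Θ₀ ^ 2 = (2 * Θ₀ ^ 2 / ε ^ 2) * ε ^ 2 := by field_simp
      _ ≤ (∑ i ∈ Finset.range N, 1 / M i ^ 2) * ε ^ 2 :=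
          mul_le_mul_of_nonneg_right hstop (le_of_lt hε2)
      _ = ε ^ 2 * ∑ i ∈ Finset.range N, 1 / M i ^ 2 := mul_comm _ _
  linarith
end

section
/- Let X be a closed convex set in a real inner product space, let f, g : X → ℝ be μ-strongly convex with respect to the norm ‖·‖ (with μ > 0), and let x_* ∈ X satisfy g(x_*) ≤ 0 and minimize f over {x ∈ X : g(x) ≤ 0}. If a point x ∈ X satisfies f(x) − f(x_*) ≤ ε and g(x) ≤ ε for some ε > 0, then (μ/2) ‖x − x_*‖² ≤ ε. -/
/-- Lemma 2.  Let `X` be a closed convex set in a real inner product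
space, `f, g : X → ℝ` be `μ`-strongly convex (`μ > 0`), and `xstar ∈ X` satisfy
`g xstar ≤ 0` and minimize `f` over `{x ∈ X : g x ≤ 0}`.  If `x ∈ X` satisfies
`f x - f xstar ≤ ε` and `g x ≤ ε` for some `ε > 0`, then `μ/2 * ‖x - xstar‖² ≤ ε`. -/
theorem strongly_convex_argument_convergence
    {E : Type*} [NormedAddCommGroup E] [InnerProductSpace ℝ E]
    (X : Set E) (hXcl : IsClosed X) (hXcv : Convex ℝ X)
    (μ : ℝ) (hμ : 0 < μ)
    (f g : E → ℝ) (hf : StrongConvexOn X μ f) (hg : StrongConvexOn X μ g)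
    (xstar : E) (hxstarX : xstar ∈ X) (hxstarg : g xstar ≤ 0)
    (hxstaropt : ∀ y ∈ X, g y ≤ 0 → f xstar ≤ f y)
    (ε : ℝ) (hε : 0 < ε)
    (x : E) (hxX : x ∈ X) (hfx : f x - f xstar ≤ ε) (hgx : g x ≤ ε) :
    μ / 2 * ‖x - xstar‖ ^ 2 ≤ ε := by
  by_contra hlt
  push_neg at hlt
  set A : ℝ := μ / 2 * ‖x - xstar‖ ^ 2 with hA
  have hA0 : 0 < A := hε.trans hlt
  set b : ℝ := (A + ε) / (2 * A) with hb
  set a : ℝ := 1 - b with ha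
  have hb0 : 0 < b := by positivity
  have hb1 : b < 1 := by
    rw [hb, div_lt_one (by linarith)]; linarith
  have ha0 : 0 ≤ a := by simp [ha]; linarith
  have hab : a + b = 1 := by ring
  have hbA : b * A = (A + ε) / 2 := by
    rw [hb, div_mul_eq_mul_div, div_eq_div_iff (mul_pos two_pos hA0).ne' two_ne_zero]; ring
  have hgz := hg.2 hxX hxstarX ha0 hb0.le hab
  have hfz := hf.2 hxX hxstarX ha0 hb0.le hab
  simp only [smul_eq_mul] at hgz hfz
  have hzX : a • x + b • xstar ∈ X := hXcv hxX hxstarX ha0 hb0.le hab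
  have ha0' : 0 < a := by
    rw [ha, hb, sub_pos, div_lt_one (by linarith)]; linarith
  have hgz0 : g (a • x + b • xstar) ≤ 0 := by
    calc g (a • x + b • xstar) ≤ a * g x + b * g xstar - a * b * A := hgz
    _ ≤ a * ε + b * 0 - a * ((A + ε) / 2) := by
        have : a * b * A = a * (b * A) := by ring
        rw [this, hbA]
        gcongr
    _ ≤ 0 := by nlinarith
  have := hxstaropt _ hzX hgz0
  have he : a * f xstar + b * f xstar = f xstar := by rw [← add_mul, hab, one_mul]
  have habA : a * (b * A) = a * ((A + ε) / 2) := by rw [hbA]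
  have hAA : a * b * (μ / 2 * ‖x - xstar‖ ^ 2) = a * (b * A) := by rw [hA]; ring
  clear_value a b A
  linarith [hfz, this, he, habA, hAA, mul_sub a (f x) (f xstar),
    mul_le_mul_of_nonneg_left hfx ha0'.le,
    mul_lt_mul_of_pos_left (show ε < (A + ε) / 2 by linarith) ha0']
end

section
/- Let X be a closed convex set in a real inner product space, let f, g : X → ℝ be μ-strongly convex (μ > 0), and let x_* ∈ X satisfy g(x_*) ≤ 0 and minimize f over {x ∈ X : g(x) ≤ 0}. If the adaptive constrained Mirror Descent algorithm output x̄ satisfies f(x̄) − f(x_*) ≤ ε and g(x̄) ≤ ε, then the argument also converges: ‖x̄ − x_*‖ ≤ sqrt(2ε/μ). -/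
/-- convergence of the argument for the strongly convex case.
Let `X` be closed convex, `f, g` be `μ`-strongly convex (`μ > 0`), and `xstar`
solve `min {f x : x ∈ X, g x ≤ 0}`.  If the adaptive constrained Mirror Descent
output `x` satisfies `f x - f xstar ≤ ε` and `g x ≤ ε`, then
`‖x - xstar‖ ≤ √(2ε/μ)`. -/
theorem md_output_argument_convergence
    {E : Type*} [NormedAddCommGroup E] [InnerProductSpace ℝ E]
    (X : Set E) (hXcl : IsClosed X) (hXcv : Convex ℝ X)
    (μ : ℝ) (hμ : 0 < μ)
    (f g : E → ℝ) (hf : StrongConvexOn X μ f) (hg : StrongConvexOn X μ g)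
    (xstar : E) (hxstarX : xstar ∈ X) (hxstarg : g xstar ≤ 0)
    (hxstaropt : ∀ y ∈ X, g y ≤ 0 → f xstar ≤ f y)
    (ε : ℝ) (hε : 0 < ε)
    (x : E) (hxX : x ∈ X) (hfx : f x - f xstar ≤ ε) (hgx : g x ≤ ε) :
    ‖x - xstar‖ ≤ Real.sqrt (2 * ε / μ) := by
  by_contra h
  push_neg at h
  set d : ℝ := ‖x - xstar‖ with hd
  have hd0 : 0 ≤ d := norm_nonneg _
  have hsq : 2 * ε / μ < d ^ 2 := by
    have h2 : 0 ≤ 2 * ε / μ := by positivity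
    calc 2 * ε / μ = Real.sqrt (2 * ε / μ) ^ 2 := (Real.sq_sqrt h2).symm
    _ < d ^ 2 := by
        apply pow_lt_pow_left₀ h (Real.sqrt_nonneg _) (by norm_num)
  have hD : 0 < d ^ 2 := lt_of_le_of_lt (by positivity) hsq
  set a : ℝ := (1 - 2 * ε / (μ * d ^ 2)) / 2 with ha
  have hkey : 2 * ε / (μ * d ^ 2) < 1 := by
    rw [div_lt_one (by positivity)]
    calc 2 * ε = (2 * ε / μ) * μ := by field_simp
    _ < d ^ 2 * μ := by exact mul_lt_mul_of_pos_right hsq hμ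
    _ = μ * d ^ 2 := mul_comm _ _
  have hk0 : 0 < 2 * ε / (μ * d ^ 2) := by positivity
  have ha0 : 0 < a := by rw [ha]; linarith
  have ha1 : a < 1 := by rw [ha]; linarith
  set z : E := a • x + (1 - a) • xstar with hz
  have hzX : z ∈ X := hXcv hxX hxstarX ha0.le (by linarith) (by ring)
  have hpen : ε < (1 - a) * (μ / 2 * d ^ 2) := by
    have h1a : 1 - a = (1 + 2 * ε / (μ * d ^ 2)) / 2 := by rw [ha]; ring
    rw [h1a]
    have : 2 * ε / (μ * d ^ 2) * (μ / 2 * d ^ 2) = ε := by field_simp; exact div_self (by rintro h0; simp [h0] at hD)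
    nlinarith [mul_pos hμ hD]
  have hfz := hf.2 hxX hxstarX ha0.le (by linarith : (0:ℝ) ≤ 1 - a) (by ring)
  have hgz := hg.2 hxX hxstarX ha0.le (by linarith : (0:ℝ) ≤ 1 - a) (by ring)
  simp only [smul_eq_mul, ← hd, ← hz] at hfz hgz
  have hgz0 : g z ≤ 0 := by nlinarith
  have := hxstaropt z hzX hgz0
  nlinarith
end
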